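/- If a quandle X is finitely generated, then its inner automorphism group Inn(X) is a finitely generated group. -/

import Mathlib

structure QuandleStruct (X : Type*) where
  op : X → X → X
  s : X → Equiv.Perm X
  s_apply : ∀ x y : X, s y x = op x y
  idem : ∀ x : X, op x x = x
  distrib : ∀ x y z : X, op (op x y) z = op (op x z) (op y z)

def QuandleStruct.Inn {X : Type*} (Q : QuandleStruct X) : Subgroup (Equiv.Perm X) :=
  Subgroup.closure (Set.range Q.s)

/-- `A` generates the quandle. -/
def QGenerates {X : Type*} (Q : QuandleStruct X) (A : Set X) : Prop :=
  ∀ x : X, ∃ a ∈ A, ∃ l : List (Equiv.Perm X),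
    (∀ g ∈ l, ∃ b ∈ A, g = Q.s b ∨ g = (Q.s b)⁻¹) ∧
    l.foldl (fun z g => g z) a = x

lemma key_conj {X : Type*} (Q : QuandleStruct X) (b y : X) :
    Q.s (Q.s b y) = Q.s b * Q.s y * (Q.s b)⁻¹ := by
  ext x
  simp only [Equiv.Perm.mul_apply, Equiv.Perm.coe_mul, Function.comp_apply]
  rw [Q.s_apply, Q.s_apply, Q.s_apply, Q.s_apply ((Q.s b)⁻¹ x) y, Q.distrib ((Q.s b)⁻¹ x) y b,
    ← Q.s_apply ((Q.s b)⁻¹ x) b, show ∀ z, Q.s b ((Q.s b)⁻¹ z) = z from fun z => by simp]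

lemma key_conj_inv {X : Type*} (Q : QuandleStruct X) (b y : X) :
    Q.s ((Q.s b)⁻¹ y) = (Q.s b)⁻¹ * Q.s y * Q.s b := by
  have h := key_conj Q b ((Q.s b)⁻¹ y)
  rw [show ∀ z, Q.s b ((Q.s b)⁻¹ z) = z from fun z => by simp] at h
  rw [h]; group

/-- A finitely generated quandle has finitely generated inner automorphism group. -/
theorem stmt2 {X : Type*} (Q : QuandleStruct X)
    (hfg : ∃ A : Finset X, QGenerates Q ↑A) : Q.Inn.FG := by
  obtain ⟨A, hA⟩ := hfg
  rw [Subgroup.fg_iff]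
  refine ⟨Q.s '' ↑A, ?_, (A.finite_toSet.image _)⟩
  apply le_antisymm
  · rw [QuandleStruct.Inn]
    apply Subgroup.closure_mono
    rintro _ ⟨b, _, rfl⟩
    exact ⟨b, rfl⟩
  · rw [QuandleStruct.Inn, Subgroup.closure_le]
    rintro _ ⟨x, rfl⟩
    obtain ⟨a, ha, l, hl, hfold⟩ := hA x
    subst hfold
    have hmem : ∀ (l : List (Equiv.Perm X)),
        (∀ g ∈ l, ∃ b ∈ (A : Set X), g = Q.s b ∨ g = (Q.s b)⁻¹) →
        ∀ z : X, Q.s z ∈ Subgroup.closure (Q.s '' ↑A) →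
        Q.s (l.foldl (fun z g => g z) z) ∈ Subgroup.closure (Q.s '' ↑A) := by
      intro l
      induction l with
      | nil => intro _ z hz; simpa using hz
      | cons g t ih =>
        intro hgood z hz
        simp only [List.foldl_cons]
        apply ih (fun g hg => hgood g (List.mem_cons_of_mem _ hg))
        obtain ⟨b, hb, hg | hg⟩ := hgood g List.mem_cons_self
        · subst hg
          rw [key_conj]
          have hsb : Q.s b ∈ Subgroup.closure (Q.s '' ↑A) :=
            Subgroup.subset_closure ⟨b, hb, rfl⟩
          exact mul_mem (mul_mem hsb hz) (inv_mem hsb)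
        · subst hg
          rw [key_conj_inv]
          have hsb : Q.s b ∈ Subgroup.closure (Q.s '' ↑A) :=
            Subgroup.subset_closure ⟨b, hb, rfl⟩
          exact mul_mem (mul_mem (inv_mem hsb) hz) hsb
    exact hmem l hl a (Subgroup.subset_closure ⟨a, ha, rfl⟩)
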